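/- The UPGMA region P(T) for the 4-leaf tree T = ((12)(34)) is not convex: the vectors v_1 = (0,0,2,2,0,1) and v_2 = (1,0,2,2,0,0) (coordinates ordered d_12,d_13,d_14,d_23,d_24,d_34) both lie in P(T), but their midpoint d = (1/2, 0, 2, 2, 0, 1/2) is not in P(T), since UPGMA applied to d first merges either {1,3} or {2,4}. -/

import Mathlib

private lemma val5 (a b c d e f : ℝ) : (![a,b,c,d,e,f] : Fin 6 → ℝ) 5 = f := rfl
private lemma val2 (a b c d e f : ℝ) : (![a,b,c,d,e,f] : Fin 6 → ℝ) 2 = c := rfl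
private lemma val3 (a b c d e f : ℝ) : (![a,b,c,d,e,f] : Fin 6 → ℝ) 3 = d := rfl
private lemma val4 (a b c d e f : ℝ) : (![a,b,c,d,e,f] : Fin 6 → ℝ) 4 = e := rfl


/-- Coordinates on `ℝ^6` are ordered `d₁₂,d₁₃,d₁₄,d₂₃,d₂₄,d₃₄` (indices `0,…,5`).
The UPGMA cone of the chain `C₁ = 1|2|3|4 ⋖ 3|4|12 ⋖ 12|34 ⋖ 1234`:
first merge `{1,2}` (so `d₁₂` minimal), then merge `{3},{4}` among `12|3|4`. -/
def upgmaConeC1 : Set (Fin 6 → ℝ) :=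
  {d | (∀ i, 0 ≤ d i) ∧
    d 0 ≤ d 1 ∧ d 0 ≤ d 2 ∧ d 0 ≤ d 3 ∧ d 0 ≤ d 4 ∧ d 0 ≤ d 5 ∧
    d 5 ≤ (d 1 + d 3) / 2 ∧ d 5 ≤ (d 2 + d 4) / 2}

/-- The UPGMA cone of the chain `C₂ = 1|2|3|4 ⋖ 1|2|34 ⋖ 34|12 ⋖ 1234`:
first merge `{3,4}` (so `d₃₄` minimal), then merge `{1},{2}` among `1|2|34`. -/
def upgmaConeC2 : Set (Fin 6 → ℝ) :=
  {d | (∀ i, 0 ≤ d i) ∧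
    d 5 ≤ d 0 ∧ d 5 ≤ d 1 ∧ d 5 ≤ d 2 ∧ d 5 ≤ d 3 ∧ d 5 ≤ d 4 ∧
    d 0 ≤ (d 1 + d 2) / 2 ∧ d 0 ≤ (d 3 + d 4) / 2}

/-- The UPGMA region `P(T)` for the 4-leaf tree `T = ((12)(34))`:
the union of the cones of the two chains returning `T`. -/
def upgmaRegionT : Set (Fin 6 → ℝ) := upgmaConeC1 ∪ upgmaConeC2

/-- `P(T)` for `T = ((12)(34))` is not convex: `v₁ = (0,0,2,2,0,1)` and
`v₂ = (1,0,2,2,0,0)` lie in `P(T)` but their midpoint `d = (1/2,0,2,2,0,1/2)` does not,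
since the minimum coordinate of `d` is attained at `d₁₃` and `d₂₄` but not at `d₁₂` or
`d₃₄`, so UPGMA first merges `{1,3}` or `{2,4}`. -/
theorem stmt14 :
    (![0, 0, 2, 2, 0, 1] : Fin 6 → ℝ) ∈ upgmaRegionT ∧
    (![1, 0, 2, 2, 0, 0] : Fin 6 → ℝ) ∈ upgmaRegionT ∧
    ((1 / 2 : ℝ) • (![0, 0, 2, 2, 0, 1] : Fin 6 → ℝ) +
        (1 / 2 : ℝ) • (![1, 0, 2, 2, 0, 0] : Fin 6 → ℝ)) =
      (![1 / 2, 0, 2, 2, 0, 1 / 2] : Fin 6 → ℝ) ∧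
    (∀ i, (![1 / 2, 0, 2, 2, 0, 1 / 2] : Fin 6 → ℝ) 1 ≤ ![1 / 2, 0, 2, 2, 0, 1 / 2] i) ∧
    (![1 / 2, 0, 2, 2, 0, 1 / 2] : Fin 6 → ℝ) 1 = ![1 / 2, 0, 2, 2, 0, 1 / 2] 4 ∧
    (![1 / 2, 0, 2, 2, 0, 1 / 2] : Fin 6 → ℝ) 1 < ![1 / 2, 0, 2, 2, 0, 1 / 2] 0 ∧
    (![1 / 2, 0, 2, 2, 0, 1 / 2] : Fin 6 → ℝ) 1 < ![1 / 2, 0, 2, 2, 0, 1 / 2] 5 ∧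
    (![1 / 2, 0, 2, 2, 0, 1 / 2] : Fin 6 → ℝ) ∉ upgmaRegionT ∧
    ¬ Convex ℝ upgmaRegionT := by

  have hv1 : (![0, 0, 2, 2, 0, 1] : Fin 6 → ℝ) ∈ upgmaRegionT := by
    left
    refine ⟨fun i => ?_, by norm_num [val2, val3, val4, val5], by norm_num [val2, val3, val4, val5], by norm_num [val2, val3, val4, val5], by norm_num [val2, val3, val4, val5], by norm_num [val2, val3, val4, val5],
      by norm_num [val2, val3, val4, val5], by norm_num [val2, val3, val4, val5]⟩
    fin_cases i <;> norm_num [val5]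
  have hv2 : (![1, 0, 2, 2, 0, 0] : Fin 6 → ℝ) ∈ upgmaRegionT := by
    right
    refine ⟨fun i => ?_, by norm_num [val2, val3, val4, val5], by norm_num [val2, val3, val4, val5], by norm_num [val2, val3, val4, val5], by norm_num [val2, val3, val4, val5], by norm_num [val2, val3, val4, val5],
      by norm_num [val2, val3, val4, val5], by norm_num [val2, val3, val4, val5]⟩
    fin_cases i <;> norm_num [val5]
  have hmid : ((1 / 2 : ℝ) • (![0, 0, 2, 2, 0, 1] : Fin 6 → ℝ) +
        (1 / 2 : ℝ) • (![1, 0, 2, 2, 0, 0] : Fin 6 → ℝ)) =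
      (![1 / 2, 0, 2, 2, 0, 1 / 2] : Fin 6 → ℝ) := by
    funext i; fin_cases i <;> simp <;> norm_num [val5]
  have hnot : (![1 / 2, 0, 2, 2, 0, 1 / 2] : Fin 6 → ℝ) ∉ upgmaRegionT := by
    rintro (⟨-, h1, -⟩ | ⟨-, -, h1, -⟩) <;> norm_num [val5] at h1
  refine ⟨hv1, hv2, hmid, fun i => ?_, by norm_num [val2, val3, val4, val5], by norm_num [val2, val3, val4, val5], by norm_num [val2, val3, val4, val5], hnot, ?_⟩
  · fin_cases i <;> norm_num [val5]
  · intro hconv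
    exact hnot (hmid ▸ hconv hv1 hv2 (by norm_num [val5]) (by norm_num [val5]) (by norm_num [val5]))
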